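/- Let R ≥ 1 and let a ≥ 3 be an odd integer, and let λ_1, …, λ_R be positive reals. If v : [0,∞) → ℝ^R is a solution of the loading dynamics dv_i/dt = λ_i v_i^a − v_i ∑_{j=1}^R λ_j v_j^{a+1} with v(0) ≠ 0, then ∑_{i=1}^R v_i(t)^2 → 1 as t → ∞ (the unit sphere is a globally attracting set for the loading dynamics when a is odd). -/

import Mathlib

open Filter Topology

/-- For odd `a > 1`, the unit sphere is globally attracting for the nonlinear
Hebbian loading dynamics: the squared norm of any nonzero solution tends to 1. -/
theorem stmt3 (R : ℕ) (hR : 1 ≤ R) (a : ℕ) (ha : 3 ≤ a) (haodd : Odd a)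
    (lam : Fin R → ℝ) (hpos : ∀ i, 0 < lam i)
    (v : ℝ → Fin R → ℝ)
    (hode : ∀ t ≥ (0 : ℝ), ∀ i,
      HasDerivAt (fun s => v s i)
        (lam i * (v t i) ^ a - v t i * ∑ j, lam j * (v t j) ^ (a + 1)) t)
    (h0 : v 0 ≠ 0) :
    Tendsto (fun t => ∑ i, (v t i) ^ 2) atTop (𝓝 1) := by
  haveI : NeZero R := ⟨by omega⟩
  obtain ⟨k, hk⟩ := haodd
  set m : ℕ := k + 1 with hmdef
  have hm : a + 1 = 2 * m := by omega
  have hm1 : 1 ≤ m := by omega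
  set n : ℝ → ℝ := fun t => ∑ i, (v t i) ^ 2 with hn
  set S : ℝ → ℝ := fun t => ∑ j, lam j * (v (max t 0) j) ^ (a + 1) with hSdef
  -- S agrees with the "real" S on t ≥ 0
  have hSeq : ∀ t ≥ (0:ℝ), S t = ∑ j, lam j * (v t j) ^ (a + 1) := by
    intro t ht
    simp [hSdef, max_eq_left ht]
  -- continuity of S
  have hvc : ∀ j, Continuous fun t => v (max t 0) j := by
    intro j
    rw [continuous_iff_continuousAt]
    intro t
    have h1 : ContinuousAt (fun s : ℝ => max s 0) t :=
      (continuous_id.max continuous_const).continuousAt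
    have h2 : ContinuousAt (fun s => v s j) (max t 0) :=
      (hode (max t 0) (le_max_right _ _) j).continuousAt
    exact ContinuousAt.comp (g := fun s => v s j) h2 h1
  have hScont : Continuous S :=
    continuous_finset_sum _ fun j _ => continuous_const.mul ((hvc j).pow _)
  -- nonnegativity of S
  have hSnn : ∀ t, 0 ≤ S t := by
    intro t
    apply Finset.sum_nonneg
    intro j _
    have : (v (max t 0) j) ^ (a + 1) = ((v (max t 0) j) ^ 2) ^ m := by
      rw [← pow_mul, ← hm]
    rw [this]
    exact mul_nonneg (hpos j).le (by positivity)
  -- the antiderivative of 2S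
  set F : ℝ → ℝ := fun t => ∫ s in (0:ℝ)..t, 2 * S s with hFdef
  have hFd : ∀ t : ℝ, HasDerivAt F (2 * S t) t := by
    intro t
    exact intervalIntegral.integral_hasDerivAt_right
      ((continuous_const.mul hScont).intervalIntegrable _ _)
      ((continuous_const.mul hScont).stronglyMeasurableAtFilter _ _)
      (continuous_const.mul hScont).continuousAt
  -- derivative of n
  have hnd : ∀ t ≥ (0:ℝ), HasDerivAt n (2 * S t * (1 - n t)) t := by
    intro t ht
    have h1 : HasDerivAt n (∑ i, ((2:ℕ) * (v t i) ^ 1 *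
        (lam i * (v t i) ^ a - v t i * ∑ j, lam j * (v t j) ^ (a + 1)))) t := by
      apply HasDerivAt.fun_sum
      intro i _
      exact (hode t ht i).pow 2
    convert h1 using 1
    rw [hSeq t ht]
    have key : ∀ i, (2:ℕ) * (v t i) ^ 1 *
        (lam i * (v t i) ^ a - v t i * ∑ j, lam j * (v t j) ^ (a + 1))
        = 2 * (lam i * (v t i) ^ (a + 1))
          - 2 * (∑ j, lam j * (v t j) ^ (a + 1)) * (v t i) ^ 2 := by
      intro i
      rw [pow_succ]
      push_cast
      ring
    rw [Finset.sum_congr rfl fun i _ => key i, Finset.sum_sub_distrib,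
      ← Finset.mul_sum, ← Finset.mul_sum]
    simp only [hn]
    ring
  -- (1 - n) * exp F is constant on [0, ∞)
  set G : ℝ → ℝ := fun t => (1 - n t) * Real.exp (F t) with hGdef
  have hGd : ∀ t ≥ (0:ℝ), HasDerivAt G 0 t := by
    intro t ht
    have := (((hasDerivAt_const t (1:ℝ)).fun_sub (hnd t ht)).fun_mul ((hFd t).exp))
    exact this.congr_deriv (by ring)
  have hGconst : ∀ t ≥ (0:ℝ), G t = G 0 := by
    intro t ht
    have hcont : ContinuousOn G (Set.Icc 0 t) := fun x hx =>
      (hGd x hx.1).continuousAt.continuousWithinAt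
    have hderiv : ∀ x ∈ Set.Ico (0:ℝ) t, HasDerivWithinAt G 0 (Set.Ici x) x :=
      fun x hx => (hGd x hx.1).hasDerivWithinAt
    exact constant_of_has_deriv_right_zero hcont hderiv t (Set.mem_Icc.2 ⟨ht, le_refl _⟩)
  have hF0 : F 0 = 0 := intervalIntegral.integral_same
  have hformula : ∀ t ≥ (0:ℝ), 1 - n t = (1 - n 0) * Real.exp (-F t) := by
    intro t ht
    have h := hGconst t ht
    simp only [hGdef, hF0, Real.exp_zero, mul_one] at h
    rw [Real.exp_neg]
    field_simp
    linarith [h]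
  -- positivity of n 0
  have hn0 : 0 < n 0 := by
    have : ∃ i, v 0 i ≠ 0 := by
      by_contra h
      push_neg at h
      exact h0 (funext h)
    obtain ⟨i, hi⟩ := this
    exact Finset.sum_pos' (fun j _ => sq_nonneg _)
      ⟨i, Finset.mem_univ i, lt_of_le_of_ne (sq_nonneg _) (Ne.symm (pow_ne_zero 2 hi))⟩
  set μ : ℝ := min (n 0) 1 with hμdef
  have hμpos : 0 < μ := lt_min hn0 one_pos
  -- F is nonneg on [0, ∞)
  have hFnn : ∀ t ≥ (0:ℝ), 0 ≤ F t := by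
    intro t ht
    apply intervalIntegral.integral_nonneg ht
    intro x _
    linarith [hSnn x]
  -- lower bound on n
  have hnlb : ∀ t ≥ (0:ℝ), μ ≤ n t := by
    intro t ht
    have hE : Real.exp (-F t) ≤ 1 := by
      rw [← Real.exp_zero]
      exact Real.exp_le_exp.2 (by linarith [hFnn t ht])
    have hf := hformula t ht
    rcases le_total (n 0) 1 with h | h
    · have : (1 - n 0) * Real.exp (-F t) ≤ (1 - n 0) * 1 :=
        mul_le_mul_of_nonneg_left hE (by linarith)
      have : n t ≥ n 0 := by nlinarith
      exact le_trans (min_le_left _ _) this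
    · have : (1 - n 0) * Real.exp (-F t) ≤ 0 :=
        mul_nonpos_of_nonpos_of_nonneg (by linarith) (Real.exp_pos _).le
      have : (1:ℝ) ≤ n t := by linarith
      exact le_trans (min_le_right _ _) this
  -- lower bound on S
  set lmin : ℝ := Finset.univ.inf' (Finset.univ_nonempty) lam with hlmindef
  have hlminpos : 0 < lmin := by
    rw [hlmindef]
    apply (Finset.lt_inf'_iff _).2
    intro j _
    exact hpos j
  have hlmin_le : ∀ j, lmin ≤ lam j := fun j => Finset.inf'_le _ (Finset.mem_univ j)
  set δ : ℝ := lmin * (μ ^ m / (R:ℝ) ^ (m - 1)) with hδdef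
  have hRpos : (0:ℝ) < (R:ℝ) := by exact_mod_cast hR
  have hδpos : 0 < δ := by
    apply mul_pos hlminpos
    positivity
  have hSlb : ∀ t ≥ (0:ℝ), δ ≤ S t := by
    intro t ht
    have hmax : max t 0 = t := max_eq_left ht
    have hsq : ∀ j, (v t j) ^ (a + 1) = ((v t j) ^ 2) ^ m := by
      intro j; rw [← pow_mul, ← hm]
    have h1 : lmin * ∑ j, ((v t j) ^ 2) ^ m ≤ S t := by
      rw [hSdef]
      simp only [hmax]
      rw [Finset.mul_sum]
      apply Finset.sum_le_sum
      intro j _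
      rw [hsq j]
      exact mul_le_mul_of_nonneg_right (hlmin_le j) (by positivity)
    have h2 : (∑ j, (v t j) ^ 2) ^ m / (R:ℝ) ^ (m - 1) ≤ ∑ j, ((v t j) ^ 2) ^ m := by
      have := pow_sum_div_card_le_sum_pow (s := (Finset.univ : Finset (Fin R)))
        (f := fun j => (v t j) ^ 2) (fun j _ => sq_nonneg _) (m - 1)
      simp only [Finset.card_univ, Fintype.card_fin] at this
      have hmm : m - 1 + 1 = m := by omega
      rwa [hmm] at this
    have h3 : μ ^ m ≤ (∑ j, (v t j) ^ 2) ^ m :=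
      pow_le_pow_left₀ hμpos.le (hnlb t ht) m
    have h4 : μ ^ m / (R:ℝ) ^ (m - 1) ≤ (∑ j, (v t j) ^ 2) ^ m / (R:ℝ) ^ (m - 1) :=
      div_le_div_of_nonneg_right h3 (by positivity) |>.trans_eq rfl
    calc δ = lmin * (μ ^ m / (R:ℝ) ^ (m - 1)) := hδdef
      _ ≤ lmin * ((∑ j, (v t j) ^ 2) ^ m / (R:ℝ) ^ (m - 1)) :=
          mul_le_mul_of_nonneg_left h4 hlminpos.le
      _ ≤ lmin * ∑ j, ((v t j) ^ 2) ^ m :=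
          mul_le_mul_of_nonneg_left h2 hlminpos.le
      _ ≤ S t := h1
  -- lower bound on F
  have hFlb : ∀ t ≥ (0:ℝ), 2 * δ * t ≤ F t := by
    intro t ht
    have : (∫ s in (0:ℝ)..t, (2 * δ)) ≤ ∫ s in (0:ℝ)..t, 2 * S s := by
      apply intervalIntegral.integral_mono_on ht
        (intervalIntegrable_const)
        ((continuous_const.mul hScont).intervalIntegrable _ _)
      intro x hx
      have := hSlb x hx.1
      show 2 * δ ≤ 2 * S x
      linarith
    rw [intervalIntegral.integral_const, smul_eq_mul, sub_zero] at this
    linarith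
  -- exp(-F t) → 0
  have hexp : Tendsto (fun t => Real.exp (-F t)) atTop (𝓝 0) := by
    apply squeeze_zero' (Filter.Eventually.of_forall fun t => (Real.exp_pos _).le)
      (g := fun t => Real.exp (-(2 * δ * t)))
    · filter_upwards [eventually_ge_atTop (0:ℝ)] with t ht
      exact Real.exp_le_exp.2 (by linarith [hFlb t ht])
    · apply Real.tendsto_exp_atBot.comp
      apply Filter.tendsto_neg_atBot_iff.mpr
      exact Tendsto.const_mul_atTop (by positivity) tendsto_id
  -- conclusion
  have hlim : Tendsto (fun t => 1 - (1 - n 0) * Real.exp (-F t)) atTop (𝓝 1) := by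
    have := tendsto_const_nhds (α := ℝ) (x := (1:ℝ)) |>.sub
      ((tendsto_const_nhds (x := 1 - n 0)).mul hexp)
    simpa using this
  apply hlim.congr'
  filter_upwards [eventually_ge_atTop (0:ℝ)] with t ht
  have := hformula t ht
  simp only [hn]
  linarith
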